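/- Let a > 0, K > 0, C ≥ 0 and suppose |f(t, v + x*)| ≤ C·|v| for all t and v. If a²/4 ≤ K < a²/2 − C, then the equilibrium x* of the controlled equation ẍ(t) + a·ẋ(t) + f(t, x(h(t))) = −K·[x(t) − x*] is globally asymptotically stable: every twice differentiable solution x satisfies x(t) → x* as t → ∞. -/

import Mathlib

open Filter MeasureTheory

lemma intInt_of_meas_bdd {v : ℝ → ℝ} {s t c : ℝ} (hm : Measurable v)
    (hb : ∀ r ∈ Set.uIcc s t, |v r| ≤ c) : IntervalIntegrable v volume s t := by
  rw [intervalIntegrable_iff]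
  refine MeasureTheory.Measure.integrableOn_of_bounded (M := c) ?_ hm.aestronglyMeasurable ?_
  · exact ((measure_mono Set.uIoc_subset_uIcc).trans_lt measure_Icc_lt_top).ne
  · exact MeasureTheory.ae_restrict_of_forall_mem measurableSet_uIoc
      (fun r hr => by simpa using hb r (Set.uIoc_subset_uIcc hr))

lemma VC {α P : ℝ} (hα : 0 < α) (w w' : ℝ → ℝ) {s t : ℝ} (hst : s ≤ t)
    (hw : ∀ r ∈ Set.Icc s t, HasDerivAt w (w' r) r)
    (hint : IntervalIntegrable (fun r => w' r + α * w r) volume s t)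
    (hb : ∀ r ∈ Set.Icc s t, |w' r + α * w r| ≤ P) :
    |w t| ≤ Real.exp (-α * (t - s)) * |w s| + P / α := by
  have hP : 0 ≤ P := le_trans (abs_nonneg _) (hb s ⟨le_refl s, hst⟩)
  set v : ℝ → ℝ := fun r => w' r + α * w r with hv
  have hW : ∀ r ∈ Set.Icc s t, HasDerivAt (fun r => Real.exp (α * r) * w r)
      (Real.exp (α * r) * v r) r := by
    intro r hr
    have h1 : HasDerivAt (fun r => Real.exp (α * r)) (α * Real.exp (α * r)) r := by
      simpa [mul_comm] using ((hasDerivAt_id r).const_mul α).exp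
    have := h1.mul (hw r hr)
    refine this.congr_deriv ?_
    simp only [hv]; ring
  have hintv : IntervalIntegrable (fun r => Real.exp (α * r) * v r) volume s t :=
    hint.continuousOn_mul (Continuous.continuousOn (by continuity))
  have hftc : ∫ r in s..t, Real.exp (α * r) * v r
      = Real.exp (α * t) * w t - Real.exp (α * s) * w s := by
    apply intervalIntegral.integral_eq_sub_of_hasDerivAt
    · intro r hr; exact hW r (by rwa [Set.uIcc_of_le hst] at hr)
    · exact hintv
  have hintP : IntervalIntegrable (fun r => Real.exp (α * r) * P) volume s t :=
    (Continuous.intervalIntegrable (by continuity) s t)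
  have hcomp : ∫ r in s..t, Real.exp (α * r) * P
      = Real.exp (α * t) * (P / α) - Real.exp (α * s) * (P / α) := by
    apply intervalIntegral.integral_eq_sub_of_hasDerivAt
    · intro r hr
      have h1 : HasDerivAt (fun r => Real.exp (α * r)) (α * Real.exp (α * r)) r := by
        simpa [mul_comm] using ((hasDerivAt_id r).const_mul α).exp
      have := h1.mul_const (P / α)
      refine this.congr_deriv ?_
      field_simp
    · exact hintP
  have h1 : |∫ r in s..t, Real.exp (α * r) * v r| ≤ ∫ r in s..t, Real.exp (α * r) * P := by
    refine le_trans (intervalIntegral.abs_integral_le_integral_abs hst) ?_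
    apply intervalIntegral.integral_mono_on hst hintv.abs hintP
    intro r hr
    rw [abs_mul, abs_of_pos (Real.exp_pos _)]
    exact mul_le_mul_of_nonneg_left (hb r hr) (Real.exp_pos _).le
  rw [hftc] at h1
  rw [hcomp] at h1
  have hepos := Real.exp_pos (α * t)
  have h2 : |Real.exp (α * t) * w t| ≤ |Real.exp (α * s) * w s| + Real.exp (α * t) * (P / α) := by
    have := abs_sub_abs_le_abs_sub (Real.exp (α * t) * w t) (Real.exp (α * s) * w s)
    have h3 : Real.exp (α * s) * (P / α) ≥ 0 := by positivity
    nlinarith [abs_nonneg (Real.exp (α * s) * w s)]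
  rw [abs_mul, abs_mul, abs_of_pos hepos, abs_of_pos (Real.exp_pos (α * s))] at h2
  have hkey : Real.exp (-α * (t - s)) * |w s| = Real.exp (α * s) * |w s| / Real.exp (α * t) := by
    rw [eq_div_iff hepos.ne', mul_right_comm, ← Real.exp_add]
    ring_nf
  rw [hkey, div_add' _ _ _ hepos.ne', le_div_iff₀ hepos]
  linarith [h2]

set_option maxHeartbeats 2000000 in
/-- Theorem 4, part b): if a²/4 ≤ K < a²/2 − C, the equilibrium x* of
ẍ(t) + a·ẋ(t) + f(t, x(h(t))) = −K[x(t) − x*] is globally asymptotically stable. -/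
theorem proportional_control_stability_case_b
    (t₀ a K C xs τ : ℝ)
    (f : ℝ → ℝ → ℝ) (h : ℝ → ℝ)
    (hhmeas : Measurable h) (hhle : ∀ t, h t ≤ t) (hhtend : Tendsto h atTop atTop)
    (hτ : 0 < τ) (hdelay : ∀ t, t - h t ≤ τ)
    (ha : 0 < a) (hK : 0 < K) (hC : 0 ≤ C)
    (hfbound : ∀ t v, |f t (v + xs)| ≤ C * |v|)
    (hcond : a ^ 2 / 4 ≤ K ∧ K < a ^ 2 / 2 - C)
    (x x' x'' : ℝ → ℝ)
    (hx' : ∀ t, HasDerivAt x (x' t) t) (hx'' : ∀ t, HasDerivAt x' (x'' t) t)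
    (hinit : ∃ M : ℝ, ∀ t ≤ t₀, |x t| ≤ M ∧ |x' t| ≤ M)
    (heq : ∀ t ≥ t₀, x'' t + a * x' t + f t (x (h t)) = -K * (x t - xs)) :
    Tendsto x atTop (nhds xs) := by
  obtain ⟨M₀, hM₀⟩ := hinit
  obtain ⟨hK1, hK2⟩ := hcond
  set al : ℝ := a / 2 with hal
  have halpos : 0 < al := by positivity
  set bb : ℝ := K - a ^ 2 / 4 with hbb
  have hbb0 : 0 ≤ bb := by rw [hbb]; linarith
  have hsum : bb + C < al ^ 2 := by
    have : al ^ 2 = a ^ 2 / 4 := by rw [hal]; ring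
    rw [this, hbb]; linarith
  have hsum0 : 0 ≤ bb + C := by linarith
  set u : ℝ → ℝ := fun t => x' t + al * (x t - xs) with hu
  set u' : ℝ → ℝ := fun t => x'' t + al * x' t with hu'
  have hud : ∀ t, HasDerivAt u (u' t) t :=
    fun t => (hx'' t).add (((hx' t).sub_const xs).const_mul al)
  have hxd : Differentiable ℝ x := fun t => (hx' t).differentiableAt
  have hx'd : Differentiable ℝ x' := fun t => (hx'' t).differentiableAt
  have hxc : Continuous x := hxd.continuous
  have hx'c : Continuous x' := hx'd.continuous
  have hyc : Continuous (fun t => x t - xs) := hxc.sub continuous_const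
  have hyac : Continuous (fun t => |x t - xs|) := hyc.abs
  have huc : Continuous u := hx'c.add (continuous_const.mul hyc)
  -- the basic differential identity
  have hode : ∀ r, t₀ ≤ r → u' r + al * u r = -(bb * (x r - xs) + f r (x (h r))) := by
    intro r hr
    have h1 := heq r hr
    simp only [hu, hu', hal, hbb]
    linear_combination h1
  have hfb : ∀ r, |f r (x (h r))| ≤ C * |x (h r) - xs| := by
    intro r
    have := hfbound r (x (h r) - xs)
    simpa using this
  have hx''m : Measurable x'' := by
    have hxx : x'' = deriv x' := funext fun t => ((hx'' t).deriv).symm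
    rw [hxx]; exact measurable_deriv x'
  -- pointwise bound on the forcing term
  have hodebnd : ∀ r P, t₀ ≤ r → |x r - xs| ≤ P → |x (h r) - xs| ≤ P →
      |u' r + al * u r| ≤ (bb + C) * P := by
    intro r P hr h1 h2
    rw [hode r hr, abs_neg]
    calc |bb * (x r - xs) + f r (x (h r))| ≤ |bb * (x r - xs)| + |f r (x (h r))| := abs_add_le _ _
      _ ≤ bb * P + C * P := by
          rw [abs_mul, abs_of_nonneg hbb0]
          have h3 := hfb r
          have h4 : C * |x (h r) - xs| ≤ C * P := mul_le_mul_of_nonneg_left h2 hC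
          have h5 : bb * |x r - xs| ≤ bb * P := mul_le_mul_of_nonneg_left h1 hbb0
          linarith
      _ = (bb + C) * P := by ring
  -- interval integrability of the u-equation right-hand side
  have hintu : ∀ s t : ℝ, t₀ ≤ s → s ≤ t →
      IntervalIntegrable (fun r => u' r + al * u r) volume s t := by
    intro s t hs hst
    have hm : Measurable (fun r => u' r + al * u r) :=
      (hx''m.add (hx'c.measurable.const_mul al)).add (huc.measurable.const_mul al)
    obtain ⟨B, hB⟩ := (isCompact_Icc (a := s - τ) (b := t)).exists_bound_of_continuousOn
      hyc.continuousOn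
    have hB' : ∀ ρ ∈ Set.Icc (s - τ) t, |x ρ - xs| ≤ B := by
      intro ρ hρ; simpa using hB ρ hρ
    have hB0 : 0 ≤ B := le_trans (abs_nonneg _)
      (hB' s ⟨by linarith, hst⟩)
    apply intInt_of_meas_bdd hm (c := (bb + C) * B)
    intro r hr
    rw [Set.uIcc_of_le hst] at hr
    refine hodebnd r B (hs.trans hr.1) (hB' r ⟨by linarith [hr.1], hr.2⟩) ?_
    refine hB' (h r) ⟨?_, ?_⟩
    · have := hdelay r; linarith [hr.1]
    · exact (hhle r).trans hr.2
  -- the fundamental estimate for u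
  have huest : ∀ s t P, t₀ ≤ s → s ≤ t →
      (∀ ρ, s ≤ ρ → ρ ≤ t → |x ρ - xs| ≤ P ∧ |x (h ρ) - xs| ≤ P) →
      |u t| ≤ Real.exp (-al * (t - s)) * |u s| + (bb + C) * P / al := by
    intro s t P hs hst hyP
    refine VC halpos u u' hst (fun r _ => hud r) (hintu s t hs hst) ?_
    intro r hr
    exact hodebnd r P (hs.trans hr.1) (hyP r hr.1 hr.2).1 (hyP r hr.1 hr.2).2
  -- the fundamental estimate for y
  have hyest : ∀ s t Q, s ≤ t → (∀ ρ, s ≤ ρ → ρ ≤ t → |u ρ| ≤ Q) →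
      |x t - xs| ≤ Real.exp (-al * (t - s)) * |x s - xs| + Q / al := by
    intro s t Q hst hQ
    refine VC halpos (fun t => x t - xs) x' hst (fun r _ => (hx' r).sub_const xs) ?_ ?_
    · exact (hx'c.add (continuous_const.mul hyc)).intervalIntegrable s t
    · intro r hr
      have : x' r + al * (x r - xs) = u r := by simp [hu]
      rw [this]
      exact hQ r hr.1 hr.2
  -- initial bounds
  set Y₀ : ℝ := M₀ + |xs| with hY₀def
  have hY₀ : ∀ t ≤ t₀, |x t - xs| ≤ Y₀ := by
    intro t ht
    calc |x t - xs| ≤ |x t| + |xs| := abs_sub _ _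
      _ ≤ Y₀ := by have := (hM₀ t ht).1; rw [hY₀def]; linarith
  have hY₀0 : 0 ≤ Y₀ := le_trans (abs_nonneg _) (hY₀ t₀ le_rfl)
  set U₀ : ℝ := M₀ + al * Y₀ with hU₀def
  have hU₀ : ∀ t ≤ t₀, |u t| ≤ U₀ := by
    intro t ht
    calc |u t| ≤ |x' t| + |al * (x t - xs)| := abs_add_le _ _
      _ ≤ M₀ + al * Y₀ := by
          rw [abs_mul, abs_of_pos halpos]
          have h1 := (hM₀ t ht).2
          have h2 := mul_le_mul_of_nonneg_left (hY₀ t ht) halpos.le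
          linarith
  have hU₀0 : 0 ≤ U₀ := le_trans (abs_nonneg _) (hU₀ t₀ le_rfl)
  set q : ℝ := (bb + C) / al ^ 2 with hq
  have hq0 : 0 ≤ q := by positivity
  have hq1 : q < 1 := by rw [hq, div_lt_one (by positivity)]; exact hsum
  set R : ℝ := (Y₀ + U₀ / al) / (1 - q) with hR
  have h1q : (0:ℝ) < 1 - q := by linarith
  have hRq : R * (1 - q) = Y₀ + U₀ / al := div_mul_cancel₀ _ h1q.ne'
  have hR0 : 0 ≤ R := div_nonneg (by positivity) h1q.le
  have hRY : Y₀ ≤ R := by nlinarith [div_nonneg hU₀0 halpos.le, hRq, mul_nonneg hR0 hq0]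
  -- global boundedness of y
  have hyR : ∀ r, t₀ - τ ≤ r → |x r - xs| ≤ R := by
    intro r₁ hr₁
    set T : ℝ := max r₁ t₀ with hT
    have hTt₀ : t₀ ≤ T := le_max_right _ _
    have hne : (Set.Icc (t₀ - τ) T).Nonempty := ⟨t₀, ⟨by linarith, hTt₀⟩⟩
    obtain ⟨ts, htsmem, htsmax⟩ := isCompact_Icc.exists_isMaxOn hne hyac.continuousOn
    have hPmax : ∀ ρ ∈ Set.Icc (t₀ - τ) T, |x ρ - xs| ≤ |x ts - xs| := fun ρ hρ => htsmax hρ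
    have hPR : |x ts - xs| ≤ R := by
      rcases le_or_gt ts t₀ with hcase | hcase
      · exact (hY₀ ts hcase).trans hRY
      · set P : ℝ := |x ts - xs| with hP
        have hbothP : ∀ ρ, t₀ ≤ ρ → ρ ≤ ts → |x ρ - xs| ≤ P ∧ |x (h ρ) - xs| ≤ P := by
          intro ρ h1 h2
          constructor
          · exact hPmax ρ ⟨by linarith, h2.trans htsmem.2⟩
          · refine hPmax (h ρ) ⟨?_, ?_⟩
            · have := hdelay ρ; linarith
            · exact (hhle ρ).trans (h2.trans htsmem.2)
        have hust : ∀ ρ, t₀ ≤ ρ → ρ ≤ ts → |u ρ| ≤ U₀ + (bb + C) * P / al := by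
          intro ρ h1 h2
          have hv := huest t₀ ρ P le_rfl h1
            (fun σ hσ1 hσ2 => hbothP σ hσ1 (hσ2.trans h2))
          refine hv.trans ?_
          have he1 : Real.exp (-al * (ρ - t₀)) ≤ 1 := Real.exp_le_one_iff.mpr (by nlinarith)
          have he0 : 0 < Real.exp (-al * (ρ - t₀)) := Real.exp_pos _
          have := hU₀ t₀ le_rfl
          nlinarith [abs_nonneg (u t₀)]
        have hyv := hyest t₀ ts (U₀ + (bb + C) * P / al) hcase.le hust
        have he1 : Real.exp (-al * (ts - t₀)) ≤ 1 := Real.exp_le_one_iff.mpr (by nlinarith)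
        have he0 : 0 < Real.exp (-al * (ts - t₀)) := Real.exp_pos _
        have hP0 : 0 ≤ P := abs_nonneg _
        -- P ≤ Y₀ + U₀/al + q * P
        have hself : P ≤ Y₀ + U₀ / al + q * P := by
          have h3 : (U₀ + (bb + C) * P / al) / al = U₀ / al + q * P := by
            rw [hq]; field_simp
          have h4 := hY₀ t₀ le_rfl
          have h5 : Real.exp (-al * (ts - t₀)) * |x t₀ - xs| ≤ Y₀ := by
            nlinarith [abs_nonneg (x t₀ - xs)]
          rw [h3] at hyv
          linarith
        nlinarith
    exact (hPmax r₁ ⟨hr₁, le_max_left _ _⟩).trans hPR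
  -- global boundedness of u
  set Ru : ℝ := U₀ + (bb + C) * R / al with hRu
  have hRu0 : 0 ≤ Ru := by rw [hRu]; positivity
  have huRu : ∀ r, t₀ ≤ r → |u r| ≤ Ru := by
    intro r hr
    have hv := huest t₀ r R le_rfl hr ?_
    · refine hv.trans ?_
      have he1 : Real.exp (-al * (r - t₀)) ≤ 1 := Real.exp_le_one_iff.mpr (by nlinarith)
      have he0 : 0 < Real.exp (-al * (r - t₀)) := Real.exp_pos _
      have := hU₀ t₀ le_rfl
      rw [hRu]
      nlinarith [abs_nonneg (u t₀)]
    · intro σ h1 h2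
      refine ⟨hyR σ (by linarith), hyR (h σ) ?_⟩
      have := hdelay σ; linarith
  clear_value al bb Y₀ U₀ q R Ru
  -- limsup machinery
  set Lf : ℝ → ℝ := fun t => |x t - xs| with hLf
  set Uf : ℝ → ℝ := fun t => |u t| with hUf
  have hLbdd : IsBoundedUnder (· ≤ ·) atTop Lf :=
    ⟨R, eventually_map.mpr ((eventually_ge_atTop (t₀ - τ)).mono fun r hr => hyR r hr)⟩
  have hUbdd : IsBoundedUnder (· ≤ ·) atTop Uf :=
    ⟨Ru, eventually_map.mpr ((eventually_ge_atTop t₀).mono fun r hr => huRu r hr)⟩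
  have hLbelow : IsBoundedUnder (· ≥ ·) atTop Lf :=
    ⟨0, eventually_map.mpr (Eventually.of_forall fun r => abs_nonneg _)⟩
  have hUbelow : IsBoundedUnder (· ≥ ·) atTop Uf :=
    ⟨0, eventually_map.mpr (Eventually.of_forall fun r => abs_nonneg _)⟩
  have hLcob : IsCoboundedUnder (· ≤ ·) atTop Lf := hLbelow.isCoboundedUnder_le
  have hUcob : IsCoboundedUnder (· ≤ ·) atTop Uf := hUbelow.isCoboundedUnder_le
  set L : ℝ := limsup Lf atTop with hLdef
  set Mu : ℝ := limsup Uf atTop with hMudef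
  clear_value L Mu
  have hL0 : 0 ≤ L := by
    rw [hLdef]; exact le_limsup_of_frequently_le (Frequently.of_forall fun t => abs_nonneg _) hLbdd
  have hMu0 : 0 ≤ Mu := by
    rw [hMudef]; exact le_limsup_of_frequently_le (Frequently.of_forall fun t => abs_nonneg _) hUbdd
  -- the key estimate for Mu
  have key1 : ∀ ε > 0, Mu ≤ (bb + C) * (L + ε) / al := by
    intro ε hε
    have h1 : ∀ᶠ r in atTop, Lf r < L + ε :=
      eventually_lt_of_limsup_lt (by linarith) hLbdd
    obtain ⟨T₁, hT₁⟩ := eventually_atTop.mp (h1.and (eventually_ge_atTop t₀))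
    obtain ⟨T₂, hT₂⟩ := eventually_atTop.mp (hhtend.eventually (eventually_ge_atTop T₁))
    set s : ℝ := max T₂ T₁ with hs
    have hsT₁ : T₁ ≤ s := le_max_right _ _
    have hst₀ : t₀ ≤ s := (hT₁ T₁ le_rfl).2.trans hsT₁
    have hLε0 : 0 ≤ L + ε := by linarith
    have hskey : ∀ t, s ≤ t →
        |u t| ≤ Real.exp (-al * (t - s)) * Ru + (bb + C) * (L + ε) / al := by
      intro t ht
      have hv := huest s t (L + ε) hst₀ ht ?_
      · refine hv.trans ?_
        have he0 : 0 < Real.exp (-al * (t - s)) := Real.exp_pos _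
        have h2 := huRu s hst₀
        linarith [mul_le_mul_of_nonneg_left h2 he0.le]
      · intro σ h1' h2'
        constructor
        · exact ((hT₁ σ (hsT₁.trans h1')).1).le
        · exact ((hT₁ (h σ) (hT₂ σ ((le_max_left _ _).trans h1'))).1).le
    refine le_of_forall_pos_le_add ?_
    intro δ hδ
    have hexp : Tendsto (fun t => Real.exp (-al * (t - s)) * Ru) atTop (nhds 0) := by
      have h1' : Tendsto (fun t : ℝ => -al * (t - s)) atTop atBot := by
        apply (tendsto_const_mul_atBot_of_neg (by linarith : -al < 0)).mpr
        exact tendsto_atTop_add_const_right _ (-s) tendsto_id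
      simpa using (Real.tendsto_exp_atBot.comp h1').mul_const Ru
    have hev : ∀ᶠ t in atTop, Uf t ≤ (bb + C) * (L + ε) / al + δ := by
      filter_upwards [hexp.eventually (gt_mem_nhds hδ), eventually_ge_atTop s] with t h2 h3
      have h4 := hskey t h3
      calc Uf t = |u t| := by rw [hUf]
        _ ≤ Real.exp (-al * (t - s)) * Ru + (bb + C) * (L + ε) / al := h4
        _ ≤ (bb + C) * (L + ε) / al + δ := by linarith
    rw [hMudef]; exact limsup_le_of_le hUcob hev
  have key1' : Mu ≤ (bb + C) * L / al := by
    refine le_of_forall_pos_le_add ?_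
    intro ε' hε'
    have hεpos : 0 < ε' * al / (bb + C + 1) := by positivity
    have := key1 _ hεpos
    refine this.trans ?_
    have hd1 : (0:ℝ) < bb + C + 1 := by linarith
    have h2 : (bb + C) * (ε' * al / (bb + C + 1)) / al = ε' * ((bb + C) / (bb + C + 1)) := by
      field_simp
    have h3 : (bb + C) / (bb + C + 1) ≤ 1 := by
      rw [div_le_one hd1]; linarith
    have h4 : ε' * ((bb + C) / (bb + C + 1)) ≤ ε' := by
      nlinarith [div_nonneg hsum0 hd1.le]
    calc (bb + C) * (L + ε' * al / (bb + C + 1)) / al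
        = (bb + C) * L / al + (bb + C) * (ε' * al / (bb + C + 1)) / al := by ring
      _ ≤ (bb + C) * L / al + ε' := by rw [h2]; linarith
  -- the key estimate for L
  have key2 : ∀ ε > 0, L ≤ (Mu + ε) / al := by
    intro ε hε
    have h1 : ∀ᶠ r in atTop, Uf r < Mu + ε :=
      eventually_lt_of_limsup_lt (by linarith) hUbdd
    obtain ⟨T₁, hT₁⟩ := eventually_atTop.mp (h1.and (eventually_ge_atTop t₀))
    set s : ℝ := T₁ with hs
    have hskey : ∀ t, s ≤ t →
        |x t - xs| ≤ Real.exp (-al * (t - s)) * R + (Mu + ε) / al := by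
      intro t ht
      have hv := hyest s t (Mu + ε) ht (fun ρ h1' _ => ((hT₁ ρ h1').1).le)
      refine hv.trans ?_
      have he0 : 0 < Real.exp (-al * (t - s)) := Real.exp_pos _
      have h2 : |x s - xs| ≤ R := hyR s (by linarith [(hT₁ T₁ le_rfl).2, hτ])
      linarith [mul_le_mul_of_nonneg_left h2 he0.le]
    refine le_of_forall_pos_le_add ?_
    intro δ hδ
    have hexp : Tendsto (fun t => Real.exp (-al * (t - s)) * R) atTop (nhds 0) := by
      have h1' : Tendsto (fun t : ℝ => -al * (t - s)) atTop atBot := by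
        apply (tendsto_const_mul_atBot_of_neg (by linarith : -al < 0)).mpr
        exact tendsto_atTop_add_const_right _ (-s) tendsto_id
      simpa using (Real.tendsto_exp_atBot.comp h1').mul_const R
    have hev : ∀ᶠ t in atTop, Lf t ≤ (Mu + ε) / al + δ := by
      filter_upwards [hexp.eventually (gt_mem_nhds hδ), eventually_ge_atTop s] with t h2 h3
      have h4 := hskey t h3
      calc Lf t = |x t - xs| := by rw [hLf]
        _ ≤ Real.exp (-al * (t - s)) * R + (Mu + ε) / al := h4
        _ ≤ (Mu + ε) / al + δ := by linarith
    rw [hLdef]; exact limsup_le_of_le hLcob hev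
  have key2' : L ≤ Mu / al := by
    refine le_of_forall_pos_le_add ?_
    intro ε' hε'
    have := key2 (ε' * al) (by positivity)
    refine this.trans (le_of_eq ?_)
    field_simp
  -- conclude L = 0
  have hLzero : L ≤ 0 := by
    have k2 : L * al ≤ Mu := (le_div_iff₀ halpos).mp key2'
    have k1 : Mu * al ≤ (bb + C) * L := (le_div_iff₀ halpos).mp key1'
    nlinarith [mul_le_mul_of_nonneg_right k2 halpos.le, k1, hL0, hsum]
  -- tendsto
  have hliminf : 0 ≤ liminf Lf atTop :=
    le_liminf_of_le hLbdd.isCoboundedUnder_ge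
      (Eventually.of_forall fun t => abs_nonneg _)
  have hLzero' : limsup Lf atTop ≤ 0 := by rw [← hLdef]; exact hLzero
  have hLtend : Tendsto Lf atTop (nhds 0) :=
    tendsto_of_le_liminf_of_limsup_le hliminf hLzero' hLbdd hLbelow
  have hytend : Tendsto (fun t => x t - xs) atTop (nhds 0) := by
    have hneg : Tendsto (fun t => -Lf t) atTop (nhds 0) := by
      simpa using hLtend.neg
    refine tendsto_of_tendsto_of_tendsto_of_le_of_le hneg hLtend ?_ ?_
    · exact fun t => neg_abs_le _
    · exact fun t => le_abs_self _
  have := hytend.add_const xs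
  simpa using this
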